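/- arXiv:1409.0525 — 3 statements merged into one kernel-verified Lean document; each statement's English description precedes it below -/
import Mathlib

section
/- Let C be a triangulated category closed under all small coproducts, E a set of compact objects of C, and t the unique t-structure on C whose class C^{t≤0} is the preaisle generated by E. Then the truncation functors τ^{≤0} and τ^{≥0} and the cohomology functor H^0 = τ^{≥0} ∘ τ^{≤0} associated with t commute with all small coproducts: for every small family (X_i) of objects of C the canonical morphisms ∐_i τ^{≤0}(X_i) → τ^{≤0}(∐_i X_i), ∐_i τ^{≥0}(X_i) → τ^{≥0}(∐_i X_i), and ∐_i H^0(X_i) → H^0(∐_i X_i) are isomorphisms. -/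
/-!
Statement 1: Let `C` be a triangulated category closed under all small coproducts,
`E` a set of compact objects and `t` the unique t-structure whose aisle `C^{t≤0}` is the
preaisle generated by `E`. Then the truncation functors `τ^{≤0}`, `τ^{≥0}` and the cohomology
functor `H^0 = τ^{≥0} ∘ τ^{≤0}` commute with all small coproducts: the canonical morphisms
`∐ τ^{≤0}(X_i) → τ^{≤0}(∐ X_i)`, `∐ τ^{≥0}(X_i) → τ^{≥0}(∐ X_i)` and
`∐ H^0(X_i) → H^0(∐ X_i)` are isomorphisms.
-/

open CategoryTheory CategoryTheory.Limits CategoryTheory.Pretriangulated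

universe v u

/-- An object `e` of a preadditive category with coproducts is *compact* if for every small
family `(X_i)` the canonical map `⊕_i Hom(e, X_i) → Hom(e, ∐_i X_i)` is bijective. -/
def IsCompactObject {C : Type u} [Category.{v} C] [Preadditive C] [HasCoproducts.{v} C]
    (e : C) : Prop :=
  ∀ ⦃ι : Type v⦄ [DecidableEq ι] (f : ι → C),
    Function.Bijective
      (DFinsupp.sumAddHom (fun i => Preadditive.rightComp e (Sigma.ι f i)) :
        (Π₀ i : ι, (e ⟶ f i)) →+ (e ⟶ ∐ f))

/-- A *t-structure* on a pretriangulated category `C` is a pair `(le, ge)` of strict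
(isomorphism-closed) classes of objects such that `le[1] ⊆ le`, `ge ⊆ ge[1]`,
`Hom(X, Y) = 0` for `X ∈ le` and `Y ∈ ge[-1]`, and every object `M` fits into a
distinguished triangle `A → M → B → A[1]` with `A ∈ le` and `B ∈ ge[-1]`. -/
structure TStructurePair (C : Type u) [Category.{v} C] [HasZeroObject C] [Preadditive C]
    [HasShift C ℤ] [∀ n : ℤ, (shiftFunctor C n).Additive] [Pretriangulated C] where
  le : Set C
  ge : Set C
  le_iso : ∀ ⦃X Y : C⦄, (X ≅ Y) → X ∈ le → Y ∈ le
  ge_iso : ∀ ⦃X Y : C⦄, (X ≅ Y) → X ∈ ge → Y ∈ ge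
  le_shift : ∀ X ∈ le, X⟦(1 : ℤ)⟧ ∈ le
  ge_shift : ∀ X ∈ ge, X⟦(-1 : ℤ)⟧ ∈ ge
  hom_zero : ∀ ⦃X Y : C⦄, X ∈ le → (Y⟦(1 : ℤ)⟧ ∈ ge) → ∀ f : X ⟶ Y, f = 0
  exists_triangle : ∀ M : C, ∃ (A B : C) (f : A ⟶ M) (g : M ⟶ B) (h : B ⟶ A⟦(1 : ℤ)⟧),
    A ∈ le ∧ B⟦(1 : ℤ)⟧ ∈ ge ∧ Triangle.mk f g h ∈ distTriang C

/-- A *preaisle* in a triangulated category with coproducts is a class of objects containing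
the zero objects, closed under the shift `X ↦ X[1]`, closed under extensions, and closed
under all small coproducts. -/
def IsPreaisle {C : Type u} [Category.{v} C] [HasZeroObject C] [Preadditive C]
    [HasShift C ℤ] [∀ n : ℤ, (shiftFunctor C n).Additive] [Pretriangulated C]
    [HasCoproducts.{v} C] (P : Set C) : Prop :=
  (∀ X : C, IsZero X → X ∈ P) ∧
  (∀ X ∈ P, X⟦(1 : ℤ)⟧ ∈ P) ∧
  (∀ T : Triangle C, T ∈ (distTriang C) → T.obj₁ ∈ P → T.obj₃ ∈ P → T.obj₂ ∈ P) ∧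
  (∀ ⦃ι : Type v⦄ (f : ι → C), (∀ i, f i ∈ P) → (∐ f) ∈ P)

/-- The preaisle generated by a set of objects `E`: the smallest preaisle containing `E`. -/
def preaisleGenerated {C : Type u} [Category.{v} C] [HasZeroObject C] [Preadditive C]
    [HasShift C ℤ] [∀ n : ℤ, (shiftFunctor C n).Additive] [Pretriangulated C]
    [HasCoproducts.{v} C] (E : Set C) : Set C :=
  ⋂₀ {P : Set C | IsPreaisle P ∧ E ⊆ P}

namespace TruncAux

open CategoryTheory.Category

variable {C : Type u} [Category.{v} C] [HasZeroObject C] [Preadditive C]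
  [HasShift C ℤ] [∀ n : ℤ, (shiftFunctor C n).Additive] [Pretriangulated C]
  [HasCoproducts.{v} C]

section CoproductTriangle

variable {ι : Type v} (T : ι → Triangle C)

/-- The coproduct of a family of triangles. -/
@[simps!]
noncomputable abbrev coproductTriangle : Triangle C :=
  Triangle.mk' _ _ _ (Limits.Sigma.map fun i => (T i).mor₁) (Limits.Sigma.map fun i => (T i).mor₂)
    (Limits.Sigma.map (fun i => (T i).mor₃) ≫
      sigmaComparison (shiftFunctor C (1 : ℤ)) (fun i => (T i).obj₁))

/-- Descent from a coproduct of triangles. -/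
@[simps]
noncomputable def coproductTriangleDesc {T' : Triangle C} (φ : ∀ i, T i ⟶ T') :
    coproductTriangle T ⟶ T' where
  hom₁ := Sigma.desc fun i => (φ i).hom₁
  hom₂ := Sigma.desc fun i => (φ i).hom₂
  hom₃ := Sigma.desc fun i => (φ i).hom₃
  comm₁ := by
    apply Sigma.hom_ext
    intro i
    simp [coproductTriangle, (φ i).comm₁]
  comm₂ := by
    apply Sigma.hom_ext
    intro i
    simp [coproductTriangle, (φ i).comm₂]
  comm₃ := by
    apply Sigma.hom_ext
    intro i
    simp only [coproductTriangle, Triangle.mk_mor₃, Triangle.mk_obj₁, colimit.ι_desc_assoc,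
      Cofan.mk_pt, Cofan.mk_ι_app, ι_colimMap_assoc, Discrete.functor_obj_eq_as,
      Discrete.natTrans_app, assoc, Sigma.ι_map_assoc]
    rw [ι_comp_sigmaComparison_assoc, ← Functor.map_comp, colimit.ι_desc]
    simpa using (φ i).comm₃

/-- A coproduct of distinguished triangles is distinguished. -/
lemma coproductTriangle_distinguished (hT : ∀ i, T i ∈ distTriang C) :
    coproductTriangle T ∈ distTriang C := by
  let f₁ := Limits.Sigma.map fun i => (T i).mor₁
  obtain ⟨Z, f₂, f₃, hT'⟩ := distinguished_cocone_triangle f₁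
  let T' := Triangle.mk' _ _ _ f₁ f₂ f₃
  change T' ∈ distTriang C at hT'
  let φ : ∀ i, T i ⟶ T' := fun i => completeDistinguishedTriangleMorphism _ _
    (hT i) hT' (Sigma.ι (fun i => (T i).obj₁) i) (Sigma.ι (fun i => (T i).obj₂) i)
    (by simp [T', f₁])
  let φ' := coproductTriangleDesc T φ
  have h₁ : φ'.hom₁ = 𝟙 _ := by
    apply Sigma.hom_ext; intro i
    simp [φ', φ, coproductTriangleDesc]
  have h₂ : φ'.hom₂ = 𝟙 _ := by
    apply Sigma.hom_ext; intro i
    simp [φ', φ, coproductTriangleDesc]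
  have : IsIso φ'.hom₁ := by rw [h₁]; infer_instance
  have : IsIso φ'.hom₂ := by rw [h₂]; infer_instance
  let scA := sigmaComparison (shiftFunctor C (1 : ℤ)) (fun i => (T i).obj₁)
  let scB := sigmaComparison (shiftFunctor C (1 : ℤ)) (fun i => (T i).obj₂)
  have hscA : IsIso scA := inferInstance
  have hscB : IsIso scB := inferInstance
  have hι₃φ : ∀ i, Sigma.ι (fun i => (T i).obj₃) i ≫ φ'.hom₃ = (φ i).hom₃ := fun i => by
    simp [φ', coproductTriangleDesc]
  suffices IsIso φ'.hom₃ by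
    have : IsIso φ' := by
      apply Triangle.isIso_of_isIsos
      all_goals infer_instance
    exact isomorphic_distinguished _ hT' _ (asIso φ')
  refine isIso_of_coyoneda_map_bijective _ (fun A => ⟨?_, ?_⟩)
  · -- injectivity of precomposition with φ'.hom₃
    suffices Epi φ'.hom₃ by
      intro a₁ a₂ ha
      simpa only [← cancel_epi φ'.hom₃] using ha
    rw [Preadditive.epi_iff_cancel_zero]
    intro A f hf
    have hf₂ : f₂ ≫ f = 0 := by
      apply Sigma.hom_ext; intro i
      have c2 : (T i).mor₂ ≫ (φ i).hom₃ = Sigma.ι (fun i => (T i).obj₂) i ≫ f₂ := by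
        simpa [φ, T'] using (φ i).comm₂
      have h3f : (φ i).hom₃ ≫ f = 0 := by rw [← hι₃φ i, assoc, hf, comp_zero]
      rw [comp_zero, ← assoc, ← c2, assoc, h3f, comp_zero]
    obtain ⟨g, hg⟩ : ∃ g : (∐ fun i => (T i).obj₁)⟦(1 : ℤ)⟧ ⟶ A, f = f₃ ≫ g :=
      Triangle.yoneda_exact₃ T' hT' f hf₂
    have hcomp : ∀ i, (T i).mor₃ ≫ ((Sigma.ι (fun i => (T i).obj₁) i)⟦(1 : ℤ)⟧' ≫ g) = 0 := by
      intro i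
      have c3 : (T i).mor₃ ≫ (Sigma.ι (fun i => (T i).obj₁) i)⟦(1 : ℤ)⟧' = (φ i).hom₃ ≫ f₃ := by
        simpa [φ, T'] using (φ i).comm₃
      have h3f : (φ i).hom₃ ≫ f = 0 := by rw [← hι₃φ i, assoc, hf, comp_zero]
      rw [← assoc, c3, assoc, ← hg, h3f]
    let m : ∀ i, (T i).obj₁⟦(1 : ℤ)⟧ ⟶ (T i).obj₂⟦(1 : ℤ)⟧ := fun i => -((T i).mor₁⟦(1 : ℤ)⟧')
    have hfac : ∀ i, ∃ wi : (T i).obj₂⟦(1 : ℤ)⟧ ⟶ A,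
        (Sigma.ι (fun i => (T i).obj₁) i)⟦(1 : ℤ)⟧' ≫ g = m i ≫ wi := by
      intro i
      obtain ⟨wi, hwi⟩ := Triangle.yoneda_exact₃ _ (rot_of_distTriang _ (hT i)) _ (hcomp i)
      exact ⟨wi, hwi.trans (by simp [m]; rfl)⟩
    let w : (∐ fun i => (T i).obj₂⟦(1 : ℤ)⟧) ⟶ A := Sigma.desc fun i => (hfac i).choose
    have hK : scA ≫ g = Limits.Sigma.map m ≫ w := by
      apply Sigma.hom_ext; intro i
      rw [ι_comp_sigmaComparison_assoc, (hfac i).choose_spec, Sigma.ι_map_assoc]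
      simp [w]
    have hL : Limits.Sigma.map m ≫ scB = scA ≫ (-(f₁⟦(1 : ℤ)⟧')) := by
      apply Sigma.hom_ext; intro i
      have l1 : Sigma.ι (fun i => (T i).obj₁⟦(1 : ℤ)⟧) i ≫ Limits.Sigma.map m ≫ scB
          = -(((T i).mor₁ ≫ Sigma.ι (fun i => (T i).obj₂) i)⟦(1 : ℤ)⟧') := by
        rw [Sigma.ι_map_assoc]
        simp only [Discrete.functor_obj_eq_as, Discrete.natTrans_app, m]
        rw [Preadditive.neg_comp, ι_comp_sigmaComparison, ← Functor.map_comp]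
      have l2 : Sigma.ι (fun i => (T i).obj₁⟦(1 : ℤ)⟧) i ≫ scA ≫ (-(f₁⟦(1 : ℤ)⟧'))
          = -(((T i).mor₁ ≫ Sigma.ι (fun i => (T i).obj₂) i)⟦(1 : ℤ)⟧') := by
        rw [ι_comp_sigmaComparison_assoc, Preadditive.comp_neg, ← Functor.map_comp]
        congr 2
        simp [f₁]
      rw [l1, l2]
    have hL' : Limits.Sigma.map m = (scA ≫ (-(f₁⟦(1 : ℤ)⟧'))) ≫ inv scB := by
      rw [IsIso.eq_comp_inv]; exact hL
    have hz : f₃ ≫ f₁⟦(1 : ℤ)⟧' = 0 := comp_distTriang_mor_zero₃₁ _ hT'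
    have hgg : f₃ ≫ g = f₃ ≫ inv scA ≫ scA ≫ g := by rw [IsIso.inv_hom_id_assoc]
    rw [hg, hgg, hK, hL']
    simp only [assoc, IsIso.inv_hom_id_assoc, Preadditive.comp_neg, Preadditive.neg_comp,
      neg_eq_zero]
    rw [← assoc, ← assoc, hz, zero_comp, zero_comp]
  · -- surjectivity of precomposition with φ'.hom₃
    intro a
    have h0 : T'.mor₁ ≫ (coproductTriangle T).mor₂ ≫ a = 0 := by
      rw [← assoc]
      have : T'.mor₁ ≫ (coproductTriangle T).mor₂ = 0 := by
        apply Sigma.hom_ext; intro i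
        simp only [T', f₁, coproductTriangle, Triangle.mk_obj₂, Triangle.mk_mor₁,
          Triangle.mk_mor₂, ι_colimMap_assoc, Discrete.functor_obj_eq_as, Discrete.natTrans_app,
          ι_colimMap, comp_zero, Sigma.ι_map_assoc, Sigma.ι_map]
        rw [← assoc, comp_distTriang_mor_zero₁₂ _ (hT i), zero_comp]
      rw [this, zero_comp]
    obtain ⟨a', ha'⟩ : ∃ a' : Z ⟶ A, (coproductTriangle T).mor₂ ≫ a = f₂ ≫ a' :=
      Triangle.yoneda_exact₂ T' hT' ((coproductTriangle T).mor₂ ≫ a) h0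
    have hd : ∀ i, (T i).mor₂ ≫ (Sigma.ι (fun i => (T i).obj₃) i ≫ (a - φ'.hom₃ ≫ a')) = 0 := by
      intro i
      have e2 : (T i).mor₂ ≫ Sigma.ι (fun i => (T i).obj₃) i ≫ a
          = Sigma.ι (fun i => (T i).obj₂) i ≫ (coproductTriangle T).mor₂ ≫ a := by
        simp [coproductTriangle]
      simp only [Preadditive.comp_sub]
      rw [sub_eq_zero, e2, ha', reassoc_of% (hι₃φ i), reassoc_of% (φ i).comm₂]
      simp [φ, T']
    have hb : ∀ i, ∃ b : (T i).obj₁⟦(1 : ℤ)⟧ ⟶ A,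
        Sigma.ι (fun i => (T i).obj₃) i ≫ (a - φ'.hom₃ ≫ a') = (T i).mor₃ ≫ b := fun i =>
      Triangle.yoneda_exact₃ _ (hT i) _ (hd i)
    let e : (∐ fun i => (T i).obj₁)⟦(1 : ℤ)⟧ ⟶ A := inv scA ≫ Sigma.desc fun i => (hb i).choose
    have hdiff : a - φ'.hom₃ ≫ a' = (coproductTriangle T).mor₃ ≫ e := by
      apply Sigma.hom_ext; intro i
      rw [(hb i).choose_spec]
      simp only [coproductTriangle, Triangle.mk_mor₃, assoc, e, scA]
      rw [Sigma.ι_map_assoc, IsIso.hom_inv_id_assoc]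
      rw [colimit.ι_desc]
      simp
    have comm3 : (coproductTriangle T).mor₃ = φ'.hom₃ ≫ f₃ := by
      have := φ'.comm₃
      rw [h₁] at this
      simpa [T'] using this
    refine ⟨a' + f₃ ≫ e, ?_⟩
    show φ'.hom₃ ≫ (a' + f₃ ≫ e) = a
    rw [Preadditive.comp_add, ← assoc, ← comm3, ← hdiff]
    abel

end CoproductTriangle


section Helpers

lemma hom_zero_of_target_iso {Z W W' : C} (e : W ≅ W') (h : ∀ g : Z ⟶ W, g = 0) :
    ∀ g : Z ⟶ W', g = 0 := fun g => by
  have h1 := h (g ≫ e.inv)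
  have : g = (g ≫ e.inv) ≫ e.hom := by simp
  rw [this, h1, zero_comp]

lemma shift_hom_zero {Z W : C} (k : ℤ) (h : ∀ g : Z ⟶ W⟦(-k : ℤ)⟧, g = 0) :
    ∀ g : Z⟦k⟧ ⟶ W, g = 0 := fun g => by
  have h1 : (shiftFunctorCompIsoId C k (-k) (add_neg_cancel k)).inv.app Z ≫ g⟦(-k : ℤ)⟧' = 0 :=
    h _
  have h2 : g⟦(-k : ℤ)⟧' = 0 := by
    have : g⟦(-k : ℤ)⟧' = (shiftFunctorCompIsoId C k (-k) (add_neg_cancel k)).hom.app Z ≫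
        ((shiftFunctorCompIsoId C k (-k) (add_neg_cancel k)).inv.app Z ≫ g⟦(-k : ℤ)⟧') := by
      rw [← assoc, Iso.hom_inv_id_app, id_comp]
    rw [this, h1, comp_zero]
  exact (shiftFunctor C (-k : ℤ)).map_eq_zero_iff.mp h2

lemma unshift_hom_zero {Z W : C} (h : ∀ g : Z⟦(1 : ℤ)⟧ ⟶ W, g = 0) :
    ∀ g : Z ⟶ W⟦(-1 : ℤ)⟧, g = 0 := fun g => by
  have h1 : g⟦(1 : ℤ)⟧' ≫ (shiftFunctorCompIsoId C (-1 : ℤ) (1 : ℤ) (by ring)).hom.app W = 0 :=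
    h _
  have h2 : g⟦(1 : ℤ)⟧' = 0 := by
    have : g⟦(1 : ℤ)⟧' = (g⟦(1 : ℤ)⟧' ≫
        (shiftFunctorCompIsoId C (-1 : ℤ) (1 : ℤ) (by ring)).hom.app W) ≫
        (shiftFunctorCompIsoId C (-1 : ℤ) (1 : ℤ) (by ring)).inv.app W := by
      simp
    rw [this, h1, zero_comp]
  exact (shiftFunctor C (1 : ℤ)).map_eq_zero_iff.mp h2

variable (t : TStructurePair C)

lemma ge_of_shift_one {Y : C} (h : Y⟦(1 : ℤ)⟧ ∈ t.ge) : Y ∈ t.ge :=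
  t.ge_iso ((shiftFunctorCompIsoId C (1 : ℤ) (-1 : ℤ) (by ring)).app Y) (t.ge_shift _ h)

lemma ge_shift_natneg (k : ℕ) : ∀ (Y : C), Y⟦(1 : ℤ)⟧ ∈ t.ge →
    (Y⟦(-(k : ℕ) : ℤ)⟧)⟦(1 : ℤ)⟧ ∈ t.ge := by
  induction k with
  | zero =>
    intro Y h
    simp only [Nat.cast_zero, neg_zero]
    exact t.ge_iso ((shiftFunctor C (1 : ℤ)).mapIso ((shiftFunctorZero C ℤ).app Y).symm) h
  | succ n ih =>
    intro Y h
    have hY : Y ∈ t.ge := ge_of_shift_one t h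
    have hY' : (Y⟦(-1 : ℤ)⟧)⟦(1 : ℤ)⟧ ∈ t.ge :=
      t.ge_iso ((shiftFunctorCompIsoId C (-1 : ℤ) (1 : ℤ) (by ring)).symm.app Y) hY
    have hIH := ih (Y⟦(-1 : ℤ)⟧) hY'
    refine t.ge_iso ((shiftFunctor C (1 : ℤ)).mapIso ?_) hIH
    exact ((shiftFunctorAdd' C (-1 : ℤ) (-(n : ℕ) : ℤ) (-((n + 1 : ℕ) : ℤ))
      (by push_cast; ring)).app Y).symm

lemma ge_shift_nonpos {n : ℤ} (hn : n ≤ 0) {Y : C} (h : Y⟦(1 : ℤ)⟧ ∈ t.ge) :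
    (Y⟦n⟧)⟦(1 : ℤ)⟧ ∈ t.ge := by
  obtain ⟨k, rfl⟩ : ∃ k : ℕ, n = -(k : ℤ) := ⟨n.natAbs, by omega⟩
  exact ge_shift_natneg t k Y h

end Helpers

section Preaisle

lemma isPreaisle_preaisleGenerated (E : Set C) : IsPreaisle (preaisleGenerated E) := by
  refine ⟨?_, ?_, ?_, ?_⟩
  · intro X hX
    exact Set.mem_sInter.2 fun P hP => hP.1.1 X hX
  · intro X hX
    exact Set.mem_sInter.2 fun P hP => hP.1.2.1 X (Set.mem_sInter.1 hX P hP)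
  · intro T hT h1 h3
    exact Set.mem_sInter.2 fun P hP =>
      hP.1.2.2.1 T hT (Set.mem_sInter.1 h1 P hP) (Set.mem_sInter.1 h3 P hP)
  · intro ι f hf
    exact Set.mem_sInter.2 fun P hP => hP.1.2.2.2 f fun i => Set.mem_sInter.1 (hf i) P hP

lemma subset_preaisleGenerated (E : Set C) : E ⊆ preaisleGenerated E := fun _ hx =>
  Set.mem_sInter.2 fun _ hP => hP.2 hx

lemma preaisleGenerated_subset {E P : Set C} (hP : IsPreaisle P) (hEP : E ⊆ P) :
    preaisleGenerated E ⊆ P := fun _ hx => Set.mem_sInter.1 hx P ⟨hP, hEP⟩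

end Preaisle

section Orthogonality

variable (t : TStructurePair C)

lemma ext_hom_zero {W : C} {T : Triangle C} (hTd : T ∈ distTriang C)
    (h1 : ∀ g : T.obj₁ ⟶ W, g = 0) (h3 : ∀ g : T.obj₃ ⟶ W, g = 0) :
    ∀ g : T.obj₂ ⟶ W, g = 0 := by
  intro g
  obtain ⟨h, hh⟩ := Triangle.yoneda_exact₂ T hTd g (h1 _)
  rw [hh, h3 h, comp_zero]

lemma hom_to_coprod_zero (E : Set C) (hE : ∀ e ∈ E, IsCompactObject e)
    (ht : t.le = preaisleGenerated E)
    {ι : Type v} (B : ι → C) (hB : ∀ i, (B i)⟦(1 : ℤ)⟧ ∈ t.ge) :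
    ∀ W ∈ t.le, (∀ g : W ⟶ ∐ B, g = 0) ∧
      (∀ n : ℤ, n ≤ 0 → ∀ g : W ⟶ (∐ B)⟦n⟧, g = 0) := by
  classical
  set P : Set C := {Z | (∀ g : Z ⟶ ∐ B, g = 0) ∧
    (∀ n : ℤ, n ≤ 0 → ∀ g : Z ⟶ (∐ B)⟦n⟧, g = 0)} with hPdef
  have hP : IsPreaisle P := by
    refine ⟨?_, ?_, ?_, ?_⟩
    · intro X hX
      exact ⟨fun g => hX.eq_of_src g 0, fun n hn g => hX.eq_of_src g 0⟩
    · intro X hX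
      refine ⟨shift_hom_zero 1 (hX.2 (-1) (by norm_num)), fun n hn g => ?_⟩
      refine shift_hom_zero 1 ?_ g
      refine hom_zero_of_target_iso
        ((shiftFunctorAdd' C n (-1 : ℤ) (n - 1) (by ring)).app (∐ B)) ?_
      exact hX.2 (n - 1) (by omega)
    · intro T hTd h1 h3
      exact ⟨ext_hom_zero hTd h1.1 h3.1,
        fun n hn => ext_hom_zero hTd (h1.2 n hn) (h3.2 n hn)⟩
    · intro κ f hf
      constructor
      · intro g
        refine Sigma.hom_ext g 0 fun i => ?_
        rw [(hf i).1 (Sigma.ι f i ≫ g), comp_zero]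
      · intro n hn g
        refine Sigma.hom_ext g 0 fun i => ?_
        rw [(hf i).2 n hn (Sigma.ι f i ≫ g), comp_zero]
  have hEP : E ⊆ P := by
    intro e he
    have heLe : e ∈ t.le := by rw [ht]; exact subset_preaisleGenerated E he
    constructor
    · intro g
      obtain ⟨d, hd⟩ := (hE e he B).2 g
      have hd0 : d = 0 := by
        ext i
        have := t.hom_zero heLe (hB i) (d i)
        simpa using this
      rw [← hd, hd0, map_zero]
    · intro n hn g
      have hcomp : ∀ i, ∀ f : e ⟶ (B i)⟦n⟧, f = 0 := fun i f =>
        t.hom_zero heLe (ge_shift_nonpos t hn (hB i)) f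
      obtain ⟨d, hd⟩ :=
        (hE e he (fun i => (B i)⟦n⟧)).2 (g ≫ inv (sigmaComparison (shiftFunctor C n) B))
      have hd0 : d = 0 := by
        ext i
        have := hcomp i (d i)
        simpa using this
      have hg : g = (g ≫ inv (sigmaComparison (shiftFunctor C n) B)) ≫
          sigmaComparison (shiftFunctor C n) B := by simp
      rw [hg, ← hd, hd0, map_zero, zero_comp]
  intro W hW
  rw [ht] at hW
  exact preaisleGenerated_subset hP hEP hW

lemma precomp_bijective {A M B : C} {a : A ⟶ M} {b : M ⟶ B} {c : B ⟶ A⟦(1 : ℤ)⟧}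
    (hT : Triangle.mk a b c ∈ distTriang C) {W : C}
    (h0 : ∀ g : W ⟶ B, g = 0) (h1 : ∀ g : W ⟶ B⟦(-1 : ℤ)⟧, g = 0) :
    Function.Bijective (fun g : W ⟶ A => g ≫ a) := by
  constructor
  · intro g₁ g₂ hg
    simp only at hg
    have hsub : (g₁ - g₂) ≫ a = 0 := by
      rw [Preadditive.sub_comp, hg, sub_self]
    obtain ⟨h, hh⟩ := Triangle.coyoneda_exact₂ _ (inv_rot_of_distTriang _ hT) (g₁ - g₂) hsub
    exact sub_eq_zero.mp (hh.trans (by rw [h1 h]; exact zero_comp))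
  · intro f
    obtain ⟨g, hg⟩ := Triangle.coyoneda_exact₂ _ hT f (h0 (f ≫ b))
    exact ⟨g, hg.symm⟩

end Orthogonality

section Main

variable (t : TStructurePair C) (E : Set C) (hE : ∀ e ∈ E, IsCompactObject e)
  (ht : t.le = preaisleGenerated E)
  (τle τge1 : C ⥤ C) (α : τle ⟶ 𝟭 C) (β : 𝟭 C ⟶ τge1)
  (δ : ∀ M : C, τge1.obj M ⟶ (τle.obj M)⟦(1 : ℤ)⟧)
  (hle : ∀ M : C, τle.obj M ∈ t.le)
  (hge : ∀ M : C, (τge1.obj M)⟦(1 : ℤ)⟧ ∈ t.ge)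
  (htri : ∀ M : C, Triangle.mk (α.app M) (β.app M) (δ M) ∈ distTriang C)

include hE ht hle hge htri

lemma main_both {ι : Type v} (Y : ι → C) :
    IsIso (sigmaComparison τle Y) ∧ IsIso (sigmaComparison τge1 Y) := by
  have hPre : IsPreaisle t.le := by rw [ht]; exact isPreaisle_preaisleGenerated E
  let Tfam : ι → Triangle C := fun i => Triangle.mk' _ _ _ (α.app (Y i)) (β.app (Y i)) (δ (Y i))
  have hTcop : coproductTriangle Tfam ∈ distTriang C :=
    coproductTriangle_distinguished Tfam (fun i => htri (Y i))
  -- the key commutation square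
  have ha : (coproductTriangle Tfam).mor₁ = sigmaComparison τle Y ≫ α.app (∐ Y) := by
    apply Sigma.hom_ext; intro i
    have lhs : Sigma.ι (fun i => (Tfam i).obj₁) i ≫ (coproductTriangle Tfam).mor₁
        = (Tfam i).mor₁ ≫ Sigma.ι (fun i => (Tfam i).obj₂) i := by
      simp [coproductTriangle]
    have hmid : Sigma.ι (fun i => (Tfam i).obj₁) i ≫ sigmaComparison τle Y
        = τle.map (Sigma.ι Y i) := ι_comp_sigmaComparison τle Y i
    have rhs : Sigma.ι (fun i => (Tfam i).obj₁) i ≫ sigmaComparison τle Y ≫ α.app (∐ Y)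
        = α.app (Y i) ≫ (𝟭 C).map (Sigma.ι Y i) := by
      rw [← assoc, hmid, α.naturality]
    exact lhs.trans rhs.symm
  -- orthogonality
  have horth := hom_to_coprod_zero t E hE ht (fun i => τge1.obj (Y i)) (fun i => hge (Y i))
  have hbcop : ∀ W ∈ t.le, Function.Bijective
      (fun g : W ⟶ (coproductTriangle Tfam).obj₁ => g ≫ (coproductTriangle Tfam).mor₁) := by
    intro W hW
    refine precomp_bijective hTcop ?_ ?_
    · exact (horth W hW).1
    · exact unshift_hom_zero (horth (W⟦(1 : ℤ)⟧) (hPre.2.1 W hW)).1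
  have hbtr : ∀ W ∈ t.le, Function.Bijective
      (fun g : W ⟶ τle.obj (∐ Y) => g ≫ α.app (∐ Y)) := by
    intro W hW
    refine precomp_bijective (htri (∐ Y)) ?_ ?_
    · exact fun g => t.hom_zero hW (hge (∐ Y)) g
    · exact unshift_hom_zero (fun g => t.hom_zero (hPre.2.1 W hW) (hge (∐ Y)) g)
  have hA : (∐ fun i => τle.obj (Y i)) ∈ t.le :=
    hPre.2.2.2 (fun i => τle.obj (Y i)) (fun i => hle (Y i))
  have hAcast : (coproductTriangle Tfam).obj₁ ∈ t.le := hA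
  obtain ⟨ρ, hρ⟩ := (hbcop (τle.obj (∐ Y)) (hle (∐ Y))).2 (α.app (∐ Y))
  have hρ' : ρ ≫ (coproductTriangle Tfam).mor₁ = α.app (∐ Y) := hρ
  have inv1 : sigmaComparison τle Y ≫ ρ = 𝟙 (∐ fun b => τle.obj (Y b)) := by
    apply (hbcop _ hAcast).1
    have l : (sigmaComparison τle Y ≫ ρ) ≫ (coproductTriangle Tfam).mor₁
        = (coproductTriangle Tfam).mor₁ := by rw [assoc, hρ', ← ha]
    have r : (𝟙 (∐ fun b => τle.obj (Y b)) : (∐ fun b => τle.obj (Y b)) ⟶ _) ≫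
        (coproductTriangle Tfam).mor₁ = (coproductTriangle Tfam).mor₁ := id_comp _
    exact l.trans r.symm
  have inv2 : ρ ≫ sigmaComparison τle Y = 𝟙 (τle.obj (∐ Y)) := by
    apply (hbtr _ (hle (∐ Y))).1
    have l : (ρ ≫ sigmaComparison τle Y) ≫ α.app (∐ Y)
        = ρ ≫ (coproductTriangle Tfam).mor₁ := by rw [assoc, ← ha]
    have r : (𝟙 (τle.obj (∐ Y)) : τle.obj (∐ Y) ⟶ _) ≫ α.app (∐ Y) = α.app (∐ Y) := id_comp _
    exact l.trans (hρ'.trans r.symm)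
  have hleIso : IsIso (sigmaComparison τle Y) := ⟨ρ, inv1, inv2⟩
  refine ⟨hleIso, ?_⟩
  -- now the τge1 comparison
  have hcomm : (coproductTriangle Tfam).mor₁ ≫ 𝟙 (∐ Y)
      = sigmaComparison τle Y ≫ (Triangle.mk (α.app (∐ Y)) (β.app (∐ Y)) (δ (∐ Y))).mor₁ := by
    have l : (coproductTriangle Tfam).mor₁ ≫ 𝟙 ((coproductTriangle Tfam).obj₂)
        = (coproductTriangle Tfam).mor₁ := comp_id _
    exact l.trans ha
  let ψ := completeDistinguishedTriangleMorphism (coproductTriangle Tfam)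
    (Triangle.mk (α.app (∐ Y)) (β.app (∐ Y)) (δ (∐ Y))) hTcop (htri (∐ Y))
    (sigmaComparison τle Y) (𝟙 (∐ Y)) hcomm
  have hψ1 : ψ.hom₁ = sigmaComparison τle Y := rfl
  have hψ2id : ψ.hom₂ = 𝟙 (∐ Y) := rfl
  have hψ3 : IsIso ψ.hom₃ := by
    refine isIso₃_of_isIso₁₂ ψ hTcop (htri (∐ Y)) ?_ ?_
    · rw [hψ1]; exact hleIso
    · rw [hψ2id]
      exact ⟨𝟙 (∐ Y), id_comp _, id_comp _⟩
  let ψ3 : (∐ fun b => τge1.obj (Y b)) ⟶ τge1.obj (∐ Y) := ψ.hom₃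
  have hψ3' : IsIso ψ3 := hψ3
  have hcomm2 : (coproductTriangle Tfam).mor₂ ≫ ψ3 = β.app (∐ Y) := by
    have h := ψ.comm₂
    rw [hψ2id] at h
    have r : (𝟙 (∐ Y) : (∐ Y) ⟶ _) ≫ (Triangle.mk (α.app (∐ Y)) (β.app (∐ Y)) (δ (∐ Y))).mor₂
        = β.app (∐ Y) := id_comp _
    exact h.trans r
  have hσ2 : (coproductTriangle Tfam).mor₂ ≫ sigmaComparison τge1 Y = β.app (∐ Y) := by
    apply Sigma.hom_ext; intro i
    have lhs : Sigma.ι (fun i => (Tfam i).obj₂) i ≫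
        (coproductTriangle Tfam).mor₂ ≫ sigmaComparison τge1 Y
        = (Tfam i).mor₂ ≫ Sigma.ι (fun i => (Tfam i).obj₃) i ≫ sigmaComparison τge1 Y := by
      simp [coproductTriangle]
    have hmid : Sigma.ι (fun i => (Tfam i).obj₃) i ≫ sigmaComparison τge1 Y
        = τge1.map (Sigma.ι Y i) := ι_comp_sigmaComparison τge1 Y i
    have rhs : (𝟭 C).map (Sigma.ι Y i) ≫ β.app (∐ Y)
        = β.app (Y i) ≫ τge1.map (Sigma.ι Y i) := β.naturality _
    rw [lhs, hmid]
    exact rhs.symm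
  have hdiff : (coproductTriangle Tfam).mor₂ ≫ (ψ3 - sigmaComparison τge1 Y) = 0 := by
    rw [Preadditive.comp_sub, hcomm2, hσ2, sub_self]
  obtain ⟨g, hg⟩ := Triangle.yoneda_exact₃ _ hTcop (ψ3 - sigmaComparison τge1 Y) hdiff
  have hA1 : ((∐ fun i => τle.obj (Y i)) : C)⟦(1 : ℤ)⟧ ∈ t.le := hPre.2.1 _ hA
  have hg0 : g = 0 := t.hom_zero hA1 (hge (∐ Y)) g
  rw [hg0, comp_zero] at hg
  have heq : sigmaComparison τge1 Y = ψ3 := (sub_eq_zero.mp hg).symm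
  rw [heq]
  exact hψ3'

end Main

lemma sigmaComparison_comp (F G : C ⥤ C) {ι : Type v} (Y : ι → C) :
    sigmaComparison (F ⋙ G) Y =
      sigmaComparison G (fun i => F.obj (Y i)) ≫ G.map (sigmaComparison F Y) := by
  apply Sigma.hom_ext; intro i
  have h1 : Sigma.ι (fun b => (F ⋙ G).obj (Y b)) i ≫ sigmaComparison (F ⋙ G) Y
      = (F ⋙ G).map (Sigma.ι Y i) := ι_comp_sigmaComparison (F ⋙ G) Y i
  have h2 : Sigma.ι (fun b => (F ⋙ G).obj (Y b)) i ≫ sigmaComparison G (fun i => F.obj (Y i))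
      = G.map (Sigma.ι (fun i => F.obj (Y i)) i) :=
    ι_comp_sigmaComparison G (fun i => F.obj (Y i)) i
  have h3 : Sigma.ι (fun i => F.obj (Y i)) i ≫ sigmaComparison F Y
      = F.map (Sigma.ι Y i) := ι_comp_sigmaComparison F Y i
  rw [h1, ← assoc, h2, ← G.map_comp, h3]
  rfl

end TruncAux

/-- The truncation functors associated with the t-structure generated by a set of compact
objects commute with all small coproducts.  Here `τle = τ^{≤0}` and `τge1 = τ^{≥1}` are the
truncation functors, given together with the natural transformations `α : τ^{≤0} → id`,
`β : id → τ^{≥1}` and the connecting morphisms `δ` fitting into the t-decomposition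
distinguished triangles; `τ^{≥0}` is the functor `M ↦ (τ^{≥1}(M[-1]))[1]` and
`H^0 = τ^{≥0} ∘ τ^{≤0}`. -/
theorem truncation_commutes_with_coproducts
    {C : Type u} [Category.{v} C] [HasZeroObject C] [Preadditive C]
    [HasShift C ℤ] [∀ n : ℤ, (shiftFunctor C n).Additive] [Pretriangulated C] [IsTriangulated C]
    [HasCoproducts.{v} C]
    (E : Set C) (hE : ∀ e ∈ E, IsCompactObject e)
    (t : TStructurePair C) (ht : t.le = preaisleGenerated E)
    (τle τge1 : C ⥤ C) (α : τle ⟶ 𝟭 C) (β : 𝟭 C ⟶ τge1)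
    (δ : ∀ M : C, τge1.obj M ⟶ (τle.obj M)⟦(1 : ℤ)⟧)
    (hle : ∀ M : C, τle.obj M ∈ t.le)
    (hge : ∀ M : C, (τge1.obj M)⟦(1 : ℤ)⟧ ∈ t.ge)
    (htri : ∀ M : C, Triangle.mk (α.app M) (β.app M) (δ M) ∈ distTriang C)
    {ι : Type v} (X : ι → C) :
    IsIso (sigmaComparison τle X) ∧
    IsIso (sigmaComparison (shiftFunctor C (-1 : ℤ) ⋙ τge1 ⋙ shiftFunctor C (1 : ℤ)) X) ∧
    IsIso (sigmaComparison
      (τle ⋙ shiftFunctor C (-1 : ℤ) ⋙ τge1 ⋙ shiftFunctor C (1 : ℤ)) X) := by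
  have main := fun {κ : Type v} (Y : κ → C) =>
    TruncAux.main_both t E hE ht τle τge1 α β δ hle hge htri Y
  have part2 : ∀ {κ : Type v} (Y : κ → C),
      IsIso (sigmaComparison (shiftFunctor C (-1 : ℤ) ⋙ τge1 ⋙ shiftFunctor C (1 : ℤ)) Y) := by
    intro κ Y
    rw [TruncAux.sigmaComparison_comp (shiftFunctor C (-1 : ℤ))
      (τge1 ⋙ shiftFunctor C (1 : ℤ)) Y]
    rw [TruncAux.sigmaComparison_comp τge1 (shiftFunctor C (1 : ℤ))
      (fun i => (shiftFunctor C (-1 : ℤ)).obj (Y i))]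
    haveI i2 : IsIso (sigmaComparison τge1 (fun i => (shiftFunctor C (-1 : ℤ)).obj (Y i))) :=
      (main _).2
    infer_instance
  refine ⟨(main X).1, part2 X, ?_⟩
  rw [TruncAux.sigmaComparison_comp τle
    (shiftFunctor C (-1 : ℤ) ⋙ τge1 ⋙ shiftFunctor C (1 : ℤ)) X]
  haveI p2 := part2 (fun i => τle.obj (X i))
  haveI pl : IsIso (sigmaComparison τle X) := (main X).1
  infer_instance
end

section
/- Let X be a nonempty T0, quasi-sober, Noetherian topological space of finite Krull dimension, and let δ₁ and δ₂ be two dimension functions on X. Then the difference δ₁ − δ₂ is constant on every connected component of X; in particular δ₁ − δ₂ is a locally constant function on X. -/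
/-!
Statement 8: Let `X` be a nonempty T0, quasi-sober, Noetherian topological space of finite
Krull dimension and let `δ₁`, `δ₂` be two dimension functions on `X`. Then `δ₁ - δ₂` is
constant on every connected component of `X`; in particular `δ₁ - δ₂` is locally constant.
-/

/-- `y` is an *immediate specialization* of `x` if `y ∈ closure {x}`, `y ≠ x`, and every
point `z` with `z ∈ closure {x}` and `y ∈ closure {z}` equals `x` or `y`. -/
def ImmediateSpecialization {X : Type*} [TopologicalSpace X] (x y : X) : Prop :=
  y ∈ closure {x} ∧ y ≠ x ∧ ∀ z : X, z ∈ closure {x} → y ∈ closure {z} → z = x ∨ z = y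

/-- A *dimension function* on a topological space `X` is a map `δ : X → ℤ` such that
`δ(x) = δ(y) + 1` whenever `y` is an immediate specialization of `x`. -/
def IsDimensionFunction {X : Type*} [TopologicalSpace X] (δ : X → ℤ) : Prop :=
  ∀ x y : X, ImmediateSpecialization x y → δ x = δ y + 1

section Aux

open TopologicalSpace

variable {X : Type*} [TopologicalSpace X]

/-- T0: equal closures of singletons force equality of points. -/
lemma aux_eq_of_closure_singleton_eq [T0Space X] {a b : X}
    (h : closure ({a} : Set X) = closure {b}) : a = b :=
  ((inseparable_iff_closure_eq).2 h).eq

lemma aux_closure_mono {a b : X} (h : b ∈ closure ({a} : Set X)) :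
    closure ({b} : Set X) ⊆ closure ({a} : Set X) :=
  closure_minimal (Set.singleton_subset_iff.2 h) isClosed_closure

/-- In a Noetherian space, any set stable under specialization and generization is closed. -/
lemma aux_isClosed_of_stable [QuasiSober X] [NoetherianSpace X]
    (A : Set X) (hA : ∀ a b : X, b ∈ closure ({a} : Set X) → (a ∈ A ↔ b ∈ A)) :
    IsClosed A := by
  classical
  set S : Set (Set X) :=
    {C | C ∈ irreducibleComponents X ∧ ∃ ξ ∈ A, C ⊆ closure ({ξ} : Set X)} with hS
  have hAeq : A = ⋃ C ∈ S, C := by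
    apply Set.Subset.antisymm
    · intro a ha
      obtain ⟨ξ, hξ⟩ := QuasiSober.sober
        (isIrreducible_irreducibleComponent (x := a)).closure isClosed_closure
      rw [isClosed_irreducibleComponent.closure_eq] at hξ
      have haξ : a ∈ closure ({ξ} : Set X) := by
        rw [hξ]; exact mem_irreducibleComponent
      have hξA : ξ ∈ A := (hA ξ a haξ).2 ha
      refine Set.mem_biUnion ?_ (mem_irreducibleComponent (x := a))
      exact ⟨irreducibleComponent_mem_irreducibleComponents a, ξ, hξA, hξ.symm.subset⟩
    · intro b hb
      obtain ⟨C, hC, hbC⟩ := Set.mem_iUnion₂.1 hb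
      obtain ⟨-, ξ, hξA, hCξ⟩ := hC
      exact (hA ξ b (hCξ hbC)).1 hξA
  rw [hAeq]
  refine Set.Finite.isClosed_biUnion
    (NoetherianSpace.finite_irreducibleComponents.subset fun C hC => hC.1) ?_
  exact fun C hC => isClosed_of_mem_irreducibleComponents C hC.1

lemma aux_isClopen_of_stable [QuasiSober X] [NoetherianSpace X]
    (A : Set X) (hA : ∀ a b : X, b ∈ closure ({a} : Set X) → (a ∈ A ↔ b ∈ A)) :
    IsClopen A := by
  refine ⟨aux_isClosed_of_stable A hA, ?_⟩
  rw [← isClosed_compl_iff]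
  exact aux_isClosed_of_stable Aᶜ (fun a b h => not_congr (hA a b h))

/-- In a Noetherian T0 space, below any strict specialization there is an immediate one. -/
lemma aux_exists_immediate [T0Space X] [NoetherianSpace X] (x y : X)
    (hxy : y ∈ closure ({x} : Set X)) (hne : y ≠ x) :
    ∃ z, ImmediateSpecialization z y ∧ z ∈ closure ({x} : Set X) := by
  classical
  set T : Set (Closeds X) :=
    {C | ∃ z : X, z ∈ closure ({x} : Set X) ∧ z ≠ y ∧ y ∈ closure ({z} : Set X) ∧
      C = ⟨closure {z}, isClosed_closure⟩} with hT
  have hTne : T.Nonempty :=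
    ⟨⟨closure {x}, isClosed_closure⟩, x, subset_closure rfl, hne.symm, hxy, rfl⟩
  obtain ⟨C, hC, hmin⟩ := (wellFounded_lt (α := Closeds X)).has_min T hTne
  obtain ⟨z, hzx, hzy, hyz, rfl⟩ := hC
  refine ⟨z, ⟨hyz, hzy.symm, ?_⟩, hzx⟩
  intro w hwz hyw
  by_cases hwy : w = y
  · exact Or.inr hwy
  · left
    have hwx : w ∈ closure ({x} : Set X) := aux_closure_mono hzx hwz
    have hmem : (⟨closure {w}, isClosed_closure⟩ : Closeds X) ∈ T :=
      ⟨w, hwx, hwy, hyw, rfl⟩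
    have hle : (⟨closure {w}, isClosed_closure⟩ : Closeds X) ≤
        ⟨closure {z}, isClosed_closure⟩ := aux_closure_mono hwz
    have hnlt := hmin _ hmem
    have : (⟨closure {w}, isClosed_closure⟩ : Closeds X) =
        ⟨closure {z}, isClosed_closure⟩ := hle.lt_or_eq.resolve_left hnlt
    · have hcl : closure ({w} : Set X) = closure ({z} : Set X) := by
        simpa [Closeds.ext_iff] using this
      exact aux_eq_of_closure_singleton_eq hcl

/-- The singleton-closure as an irreducible closed set. -/
noncomputable def auxPt (x : X) : IrreducibleCloseds X :=
  ⟨closure {x}, isIrreducible_singleton.closure, isClosed_closure⟩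

lemma auxPt_lt [T0Space X] {a b : X} (h : a ∈ closure ({b} : Set X)) (hne : a ≠ b) :
    auxPt a < auxPt b := by
  refine lt_of_le_of_ne ?_ ?_
  · show closure ({a} : Set X) ≤ closure {b}
    exact aux_closure_mono h
  · intro hEq
    have : closure ({a} : Set X) = closure {b} := congrArg (fun c => c.carrier) hEq
    exact hne (aux_eq_of_closure_singleton_eq this)

/-- A function compatible with immediate specializations is constant along specializations,
in a Noetherian T0 space of finite Krull dimension. -/
lemma aux_const_of_spec [T0Space X] [NoetherianSpace X]
    (hdim : topologicalKrullDim X ≠ ⊤) (f : X → ℤ)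
    (hf : ∀ a b : X, ImmediateSpecialization a b → f a = f b) :
    ∀ x y : X, y ∈ closure ({x} : Set X) → f x = f y := by
  classical
  intro x₀ y₀ hy₀
  by_cases hxy : y₀ = x₀
  · rw [hxy]
  -- extract a natural number bound on lengths of chains of irreducible closeds
  have hne : Nonempty (IrreducibleCloseds X) := ⟨auxPt x₀⟩
  obtain ⟨n, hn⟩ : ∃ n : ℕ, ∀ p : LTSeries (IrreducibleCloseds X), p.length ≤ n := by
    have h0 : (0 : WithBot ℕ∞) ≤ Order.krullDim (IrreducibleCloseds X) :=
      Order.krullDim_nonneg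
    have hTop : Order.krullDim (IrreducibleCloseds X) ≠ ⊤ := hdim
    rcases hd : Order.krullDim (IrreducibleCloseds X) with _ | m
    · rw [hd] at h0
      exact absurd (le_bot_iff.mp h0) (by simp)
    · rcases m with _ | n
      · exact absurd (hd.trans rfl) hTop
      · refine ⟨n, fun p => ?_⟩
        have := Order.LTSeries.length_le_krullDim p
        rw [hd, show (some (some n) : WithBot ℕ∞) = ((n : ℕ) : WithBot ℕ∞) from rfl] at this
        exact_mod_cast this
  -- strong induction on the chain-length bound between the two points
  have claim : ∀ k : ℕ, ∀ x y : X, y ∈ closure ({x} : Set X) → y ≠ x →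
      (∀ p : LTSeries (IrreducibleCloseds X),
        p.head = auxPt y → p.last = auxPt x → p.length ≤ k) → f x = f y := by
    intro k
    induction k with
    | zero =>
      intro x y hxy hne hbound
      exfalso
      have hlt : auxPt y < auxPt x := auxPt_lt hxy hne
      have := hbound ((RelSeries.singleton _ (auxPt x)).cons (auxPt y) hlt)
        (RelSeries.head_cons _ _ _) (RelSeries.last_cons _ _ _)
      change (0:ℕ) + 1 ≤ 0 at this; omega
    | succ k ih =>
      intro x y hxy hne hbound
      obtain ⟨z, hz, hzx⟩ := aux_exists_immediate x y hxy hne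
      have hfz : f z = f y := hf z y hz
      by_cases hzx' : z = x
      · rw [← hzx', hfz]
      · have hstep : f x = f z := by
          refine ih x z hzx hzx' ?_
          intro p hh hl
          have hylt : auxPt y < p.head := by
            rw [hh]; exact auxPt_lt hz.1 hz.2.1
          have := hbound (p.cons (auxPt y) hylt) (by simp) (by simpa using hl)
          rw [RelSeries.cons_length] at this; omega
        rw [hstep, hfz]
  exact claim n x₀ y₀ hy₀ hxy (fun p _ _ => hn p)

end Aux

/-- Two dimension functions on a nonempty T0, quasi-sober, Noetherian topological space of
finite Krull dimension differ by a function which is constant on every connected component;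
in particular their difference is locally constant. -/
theorem dimensionFunction_sub_locallyConstant
    {X : Type*} [TopologicalSpace X] [Nonempty X] [T0Space X] [QuasiSober X]
    [TopologicalSpace.NoetherianSpace X] (hdim : topologicalKrullDim X ≠ ⊤)
    {δ₁ δ₂ : X → ℤ} (h₁ : IsDimensionFunction δ₁) (h₂ : IsDimensionFunction δ₂) :
    (∀ x y : X, y ∈ connectedComponent x → δ₁ x - δ₂ x = δ₁ y - δ₂ y) ∧
    IsLocallyConstant fun x => δ₁ x - δ₂ x := by
  set f : X → ℤ := fun x => δ₁ x - δ₂ x with hfdef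
  have hf : ∀ a b : X, ImmediateSpecialization a b → f a = f b := by
    intro a b h
    have e₁ := h₁ a b h
    have e₂ := h₂ a b h
    simp only [hfdef]
    omega
  have hconst : ∀ a b : X, b ∈ closure ({a} : Set X) → f a = f b :=
    aux_const_of_spec hdim f hf
  have hclopen : ∀ x : X, IsClopen {y | f y = f x} := by
    intro x
    refine aux_isClopen_of_stable _ ?_
    intro a b hb
    simp only [Set.mem_setOf_eq, hconst a b hb]
  constructor
  · intro x y hy
    exact (((hclopen x).connectedComponent_subset rfl) hy).symm
  · rw [IsLocallyConstant.iff_exists_open]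
    intro x
    exact ⟨{y | f y = f x}, (hclopen x).2, rfl, fun y hy => hy⟩
end

section
/- Let X be a nonempty T0, quasi-sober, Noetherian topological space of finite Krull dimension. Then every dimension function δ : X → ℤ on X is bounded: there exist integers a ≤ b with a ≤ δ(x) ≤ b for all x ∈ X. -/
set_option linter.unusedSectionVars false


section DFaux
open TopologicalSpace Order

section aux
variable {X : Type*} [TopologicalSpace X] [T0Space X] [QuasiSober X]

noncomputable def DFgp (S : IrreducibleCloseds X) : X := S.isIrreducible'.genericPoint

lemma DFgp_closure (S : IrreducibleCloseds X) : closure {DFgp S} = (S : Set X) :=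
  S.isIrreducible'.closure_genericPoint S.isClosed'

lemma DFgp_mem (S : IrreducibleCloseds X) : DFgp S ∈ (S : Set X) := by
  rw [← DFgp_closure S]; exact subset_closure rfl

def DFpt (x : X) : IrreducibleCloseds X :=
  ⟨closure {x}, isIrreducible_singleton.closure, isClosed_closure⟩

lemma DFpt_coe (x : X) : (DFpt x : Set X) = closure {x} := rfl

lemma DFgp_pt (x : X) : DFgp (DFpt x) = x := by
  have h : closure {DFgp (DFpt x)} = closure ({x} : Set X) := DFgp_closure (DFpt x)
  have h1 : DFgp (DFpt x) ⤳ x := by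
    rw [specializes_iff_mem_closure, h]; exact subset_closure rfl
  have h2 : x ⤳ DFgp (DFpt x) := by
    rw [specializes_iff_mem_closure, ← h]; exact subset_closure rfl
  exact (h1.antisymm h2).eq

lemma DFpt_gp (S : IrreducibleCloseds X) : DFpt (DFgp S) = S :=
  SetLike.coe_injective (DFgp_closure S)

end aux

section main
variable {X : Type*} [TopologicalSpace X] [T0Space X] [QuasiSober X]

lemma DF_cov {δ : X → ℤ} (hδ : ∀ x y : X, ImmediateSpecialization x y → δ x = δ y + 1)
    {S T : IrreducibleCloseds X} (h : S ⋖ T) : δ (DFgp T) = δ (DFgp S) + 1 := by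
  apply hδ
  refine ⟨?_, ?_, ?_⟩
  · rw [DFgp_closure T]
    exact h.lt.le (DFgp_mem S)
  · intro e
    have : S = T := by rw [← DFpt_gp S, ← DFpt_gp T, e]
    exact h.lt.ne this
  · intro z hz hz2
    have hS : S ≤ DFpt z := by
      change (S : Set X) ⊆ closure {z}
      rw [← DFgp_closure S]
      exact closure_minimal (Set.singleton_subset_iff.mpr hz2) isClosed_closure
    have hT : DFpt z ≤ T := by
      change closure {z} ⊆ (T : Set X)
      apply closure_minimal _ T.isClosed'
      rw [Set.singleton_subset_iff]
      show z ∈ (T : Set X)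
      rw [← DFgp_closure T]
      exact hz
    rcases h.wcovBy.eq_or_eq hS hT with h' | h'
    · right; rw [← DFgp_pt z, h']
    · left; rw [← DFgp_pt z, h']

open Classical in
noncomputable def DFf {X : Type*} [TopologicalSpace X] [QuasiSober X] (δ : X → ℤ)
    (s : Set X) : ℤ :=
  if hs : IsIrreducible s ∧ IsClosed s then δ (DFgp ⟨s, hs.1, hs.2⟩) else 0

lemma DF_chain {δ : X → ℤ} (hδ : ∀ x y : X, ImmediateSpecialization x y → δ x = δ y + 1) :
    ∀ (m : ℕ) (S T : IrreducibleCloseds X), S < T →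
    (∀ p : LTSeries (IrreducibleCloseds X), p.head = S → p.last = T → p.length ≤ m) →
    ∃ n : ℕ, 1 ≤ n ∧ δ (DFgp T) = δ (DFgp S) + n ∧
      ∃ p : LTSeries (IrreducibleCloseds X), p.head = S ∧ p.last = T ∧ p.length = n := by
  intro m
  induction m with
  | zero =>
    intro S T hST hb
    have := hb (((RelSeries.singleton _ S : LTSeries (IrreducibleCloseds X))).snoc T hST) (by rfl) (by rfl)
    exact absurd (this : (1 : ℕ) ≤ 0) (Nat.not_succ_le_zero 0)
  | succ m ih =>
    intro S T hST hb
    by_cases hc : S ⋖ T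
    · exact ⟨1, le_refl 1, by rw [DF_cov hδ hc]; push_cast; ring,
        ((RelSeries.singleton _ S : LTSeries (IrreducibleCloseds X))).snoc T hST, by rfl, by rfl, by rfl⟩
    · have : ∃ c, S < c ∧ c < T := by
        by_contra hne
        push_neg at hne
        exact hc ⟨hST, fun c h1 h2 => (hne c h1).elim h2⟩
      obtain ⟨c, hSc, hcT⟩ := this
      obtain ⟨n1, hn1, he1, p1, hp1h, hp1l, hp1len⟩ := ih S c hSc (by
        intro p hh hl
        have := hb (p.snoc T (by rw [hl]; exact hcT)) (by simpa using hh) (by simp)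
        simpa using this)
      obtain ⟨n2, hn2, he2, p2, hp2h, hp2l, hp2len⟩ := ih c T hcT (by
        intro p hh hl
        have := hb (p.cons S (by rw [hh]; exact hSc)) (by simp) (by simpa using hl)
        simpa using this)
      refine ⟨n1 + n2, le_trans hn1 (Nat.le_add_right _ _), by rw [he2, he1]; push_cast; ring,
        p1.smash p2 (hp1l.trans hp2h.symm), by simpa using hp1h, by simpa using hp2l, by
          simp [RelSeries.smash, hp1len, hp2len]⟩

end main

theorem dimensionFunction_bounded_aux
    {X : Type*} [TopologicalSpace X] [Nonempty X] [T0Space X] [QuasiSober X]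
    [TopologicalSpace.NoetherianSpace X] (hdim : topologicalKrullDim X ≠ ⊤)
    {δ : X → ℤ} (hδ : ∀ x y : X, ImmediateSpecialization x y → δ x = δ y + 1) :
    ∃ a b : ℤ, a ≤ b ∧ ∀ x : X, a ≤ δ x ∧ δ x ≤ b := by
  classical
  have hne : Nonempty (IrreducibleCloseds X) := ⟨DFpt (Classical.arbitrary X)⟩
  rw [topologicalKrullDim] at hdim
  -- extract a natural number bound on lengths of chains
  obtain ⟨N, hN⟩ : ∃ N : ℕ, ∀ p : LTSeries (IrreducibleCloseds X), p.length ≤ N := by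
    have h0 : (0 : WithBot ℕ∞) ≤ krullDim (IrreducibleCloseds X) := krullDim_nonneg
    rcases k : krullDim (IrreducibleCloseds X) with _ | e
    · rw [k] at h0
      change (0 : WithBot ℕ∞) ≤ ⊥ at h0
      simp at h0
    · rw [k] at hdim
      lift e to ℕ using (by intro he; exact hdim (by rw [he]; rfl))
      refine ⟨e, fun p => ?_⟩
      have := LTSeries.length_le_krullDim p
      rw [k, WithBot.some_eq_coe] at this
      exact_mod_cast this
  -- the generic point of the component of x
  set cI : X → IrreducibleCloseds X := fun x =>
    ⟨irreducibleComponent x, isIrreducible_irreducibleComponent, isClosed_irreducibleComponent⟩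
    with hcI
  set g : X → ℤ := fun x => δ (DFgp (cI x)) with hg
  have key : ∀ x : X, ∃ n : ℕ, n ≤ N ∧ g x = δ x + n := by
    intro x
    have hle : DFpt x ≤ cI x := by
      change closure ({x} : Set X) ⊆ irreducibleComponent x
      exact closure_minimal (Set.singleton_subset_iff.mpr mem_irreducibleComponent)
        isClosed_irreducibleComponent
    rcases eq_or_lt_of_le hle with heq | hlt
    · exact ⟨0, Nat.zero_le _, by simp [hg, ← heq, DFgp_pt x]⟩
    · obtain ⟨n, hn1, he, p, _, _, hplen⟩ := DF_chain hδ N (DFpt x) (cI x) hlt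
        (fun p _ _ => hN p)
      exact ⟨n, hplen ▸ hN p, by rw [hg]; simp only []; rw [he, DFgp_pt x]⟩
  -- finiteness of the range of g
  have hrange : Set.range g ⊆ DFf δ '' irreducibleComponents X := by
    rintro - ⟨x, rfl⟩
    refine ⟨irreducibleComponent x, irreducibleComponent_mem_irreducibleComponents x, ?_⟩
    unfold DFf
    rw [dif_pos ⟨isIrreducible_irreducibleComponent, isClosed_irreducibleComponent⟩]
  have hfin : (Set.range g).Finite :=
    Set.Finite.subset (Set.Finite.image (DFf δ) TopologicalSpace.NoetherianSpace.finite_irreducibleComponents) hrange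
  obtain ⟨b, hb⟩ := hfin.bddAbove
  obtain ⟨a', ha'⟩ := hfin.bddBelow
  refine ⟨a' - N, b, ?_, ?_⟩
  · have h1 : a' ≤ g (Classical.arbitrary X) := ha' (Set.mem_range_self _)
    have h2 : g (Classical.arbitrary X) ≤ b := hb (Set.mem_range_self _)
    have : (0 : ℤ) ≤ N := Int.ofNat_nonneg N
    omega
  · intro x
    obtain ⟨n, hn, he⟩ := key x
    have h1 : a' ≤ g x := ha' (Set.mem_range_self _)
    have h2 : g x ≤ b := hb (Set.mem_range_self _)
    have hnN : (n : ℤ) ≤ N := Int.ofNat_le.mpr hn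
    have hn0 : (0 : ℤ) ≤ n := Int.ofNat_nonneg n
    omega


end DFaux

/-- Every dimension function on a nonempty T0, quasi-sober, Noetherian topological space of
finite Krull dimension is bounded. -/
theorem dimensionFunction_bounded
    {X : Type*} [TopologicalSpace X] [Nonempty X] [T0Space X] [QuasiSober X]
    [TopologicalSpace.NoetherianSpace X] (hdim : topologicalKrullDim X ≠ ⊤)
    {δ : X → ℤ} (hδ : IsDimensionFunction δ) :
    ∃ a b : ℤ, a ≤ b ∧ ∀ x : X, a ≤ δ x ∧ δ x ≤ b :=
  dimensionFunction_bounded_aux hdim hδ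
end
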